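/- Let D be a distribution on X×Y with X finite and Y = {0,1}, let β ∈ (0, 0.1), α > 0, d ≥ 1, and let H be a fixed nonempty finite set of hypotheses X → Y with log₂|H| ≤ d. Let γ = 2(d + log(1/β) + 10)/α and m = ⌈10⁶·γ²·d·log(1/β)/β⁴⌉. Draw S ∼ D^m and define the distribution 𝒫_H on H with 𝒫_H(h) proportional to exp(−γ·Err_D(h)), and the (random) distribution 𝒫̂_{H,S} on H with 𝒫̂_{H,S}(h) proportional to exp(−γ·Err_S(h)). Then Pr_{S∼D^m}[d_TV(𝒫_H, 𝒫̂_{H,S}) ≤ β/10] ≥ 1 − β²/10. -/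

import Mathlib

open scoped ENNReal Classical

noncomputable section

def pmfPi {β : Type*} : {n : ℕ} → (Fin n → PMF β) → PMF (Fin n → β)
  | 0, _ => PMF.pure Fin.elim0
  | _ + 1, p => (p 0).bind fun b => (pmfPi fun i => p i.succ).bind fun f => PMF.pure (Fin.cons b f)

def iidPMF {Z : Type*} (D : PMF Z) (m : ℕ) : PMF (Fin m → Z) := pmfPi fun _ => D

def pr {α : Type*} (p : PMF α) (s : Set α) : ℝ≥0∞ := p.toOuterMeasure s

def errD {X : Type*} (D : PMF (X × Bool)) (h : X → Bool) : ℝ≥0∞ := pr D {z | h z.1 ≠ z.2}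

/-- empirical error of `h` on the sample tuple `S` -/
def errS {X : Type*} {m : ℕ} (S : Fin m → X × Bool) (h : X → Bool) : ℝ :=
  ((Finset.univ.filter fun i => h (S i).1 ≠ (S i).2).card : ℝ) / m

open Finset

section Aux

lemma pmfPi_apply' {Z : Type*} {n : ℕ} (p : Fin n → PMF Z) (g : Fin n → Z) :
    pmfPi p g = ∏ i, p i (g i) := by
  induction n with
  | zero =>
      simp [pmfPi, PMF.pure_apply, Subsingleton.elim g Fin.elim0]
  | succ n ih =>
      rw [show pmfPi p = (p 0).bind fun b => (pmfPi fun i => p i.succ).bind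
        fun f => PMF.pure (Fin.cons b f) from rfl]
      rw [PMF.bind_apply]
      have key : ∀ b, ((pmfPi fun i => p i.succ).bind fun f => PMF.pure (Fin.cons b f)) g
          = if b = g 0 then (pmfPi fun i => p i.succ) (Fin.tail g) else 0 := by
        intro b
        rw [PMF.bind_apply]
        by_cases hb : b = g 0
        · subst hb
          rw [if_pos rfl, tsum_eq_single (Fin.tail g)]
          · simp [PMF.pure_apply, Fin.cons_self_tail]
          · intro f hf
            have hne : g ≠ Fin.cons (g 0) f := by
              intro h
              apply hf
              rw [h, Fin.tail_cons]
            simp [PMF.pure_apply, hne]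
        · rw [if_neg hb]
          apply ENNReal.tsum_eq_zero.2
          intro f
          have hne : g ≠ Fin.cons b f := by
            intro h; apply hb; rw [h]; simp
          simp [PMF.pure_apply, hne]
      calc (∑' b, p 0 b * ((pmfPi fun i => p i.succ).bind fun f => PMF.pure (Fin.cons b f)) g)
          = ∑' b, p 0 b * (if b = g 0 then (pmfPi fun i => p i.succ) (Fin.tail g) else 0) := by
            congr 1; funext b; rw [key b]
        _ = p 0 (g 0) * (pmfPi fun i => p i.succ) (Fin.tail g) := by
            rw [tsum_eq_single (g 0)]
            · simp
            · intro b hb; simp [hb]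
        _ = ∏ i, p i (g i) := by
            rw [ih (fun i => p i.succ) (Fin.tail g), Fin.prod_univ_succ]
            rfl

lemma pr_eq_ofReal' {α : Type*} [Fintype α] (p : PMF α) (P : α → Prop) :
    pr p {a | P a} = ENNReal.ofReal (∑ a ∈ univ.filter P, (p a).toReal) := by
  rw [pr, PMF.toOuterMeasure_apply, tsum_fintype]
  have h1 : ∀ a : α, ({a | P a} : Set α).indicator p a = if P a then p a else 0 := by
    intro a; simp [Set.indicator_apply, Set.mem_setOf_eq]
  rw [ENNReal.ofReal_sum_of_nonneg (fun _ _ => ENNReal.toReal_nonneg)]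
  rw [Finset.sum_congr rfl (fun a _ => h1 a), Finset.sum_ite, Finset.sum_const_zero, add_zero]
  exact Finset.sum_congr rfl fun a _ => (ENNReal.ofReal_toReal (PMF.apply_ne_top p a)).symm

lemma sum_toReal_eq_one' {α : Type*} [Fintype α] (p : PMF α) :
    ∑ a, (p a).toReal = 1 := by
  have h := p.tsum_coe
  rw [tsum_fintype] at h
  have := congrArg ENNReal.toReal h
  rwa [ENNReal.toReal_sum (fun a _ => PMF.apply_ne_top p a), ENNReal.toReal_one] at this

lemma union_bound' {α ι : Type*} [Fintype α] (H : Finset ι) (Q : ι → α → Prop)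
    (w : α → ℝ) (hw : ∀ a, 0 ≤ w a) :
    ∑ a ∈ univ.filter (fun a => ∃ h ∈ H, Q h a), w a
      ≤ ∑ h ∈ H, ∑ a ∈ univ.filter (Q h), w a := by
  induction H using Finset.induction with
  | empty => simp
  | @insert i s hi ih =>
      have hsub : univ.filter (fun a => ∃ h ∈ insert i s, Q h a)
          ⊆ univ.filter (Q i) ∪ univ.filter (fun a => ∃ h ∈ s, Q h a) := by
        intro a ha
        simp only [Finset.mem_filter, Finset.mem_univ, true_and, Finset.mem_insert,
          Finset.mem_union] at ha ⊢
        obtain ⟨h, hh | hh, hq⟩ := ha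
        · exact Or.inl (hh ▸ hq)
        · exact Or.inr ⟨h, hh, hq⟩
      calc ∑ a ∈ univ.filter (fun a => ∃ h ∈ insert i s, Q h a), w a
          ≤ ∑ a ∈ univ.filter (Q i) ∪ univ.filter (fun a => ∃ h ∈ s, Q h a), w a :=
            Finset.sum_le_sum_of_subset_of_nonneg hsub (fun a _ _ => hw a)
        _ ≤ ∑ a ∈ univ.filter (Q i), w a + ∑ a ∈ univ.filter (fun a => ∃ h ∈ s, Q h a), w a := by
            have := Finset.sum_union_inter (s₁ := univ.filter (Q i))
              (s₂ := univ.filter (fun a => ∃ h ∈ s, Q h a)) (f := w)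
            have hnn : 0 ≤ ∑ a ∈ univ.filter (Q i) ∩ univ.filter (fun a => ∃ h ∈ s, Q h a), w a :=
              Finset.sum_nonneg fun a _ => hw a
            linarith
        _ ≤ ∑ a ∈ univ.filter (Q i), w a + ∑ h ∈ s, ∑ a ∈ univ.filter (Q h), w a := by
            linarith [ih]
        _ = ∑ h ∈ insert i s, ∑ a ∈ univ.filter (Q h), w a := by
            rw [Finset.sum_insert hi]

lemma exp_aux' {t : ℝ} (h0 : 0 ≤ t) (h1 : t ≤ 1/2) : Real.exp t - 1 - t ≤ 2 * t^2 := by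
  have h2 : 1 - t ≤ Real.exp (-t) := by linarith [Real.add_one_le_exp (-t)]
  have h3 : (1 - t) * Real.exp t ≤ 1 := by
    have := mul_le_mul_of_nonneg_right h2 (Real.exp_pos t).le
    rwa [← Real.exp_add, neg_add_cancel, Real.exp_zero] at this
  nlinarith [Real.exp_pos t, sq_nonneg t, mul_nonneg (mul_nonneg h0 h0) h0]

lemma tail_bound' {Z : Type*} [Fintype Z] (w : Z → ℝ) (hw0 : ∀ z, 0 ≤ w z)
    (hw1 : ∑ z, w z = 1) {m : ℕ} (hm : 0 < m) (P : Z → Prop) (ε : ℝ)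
    (hε0 : 0 < ε) (hε1 : ε ≤ 1) :
    ∑ S ∈ univ.filter (fun S : Fin m → Z =>
        (∑ z ∈ univ.filter P, w z) + ε < ((univ.filter fun i => P (S i)).card : ℝ) / m),
      ∏ i, w (S i) ≤ Real.exp (-(m : ℝ) * ε ^ 2 / 8) := by
  set q : ℝ := ∑ z ∈ univ.filter P, w z with hq
  have hq0 : 0 ≤ q := Finset.sum_nonneg fun z _ => hw0 z
  have hq1 : q ≤ 1 := by
    rw [← hw1]
    exact Finset.sum_le_sum_of_subset_of_nonneg (Finset.filter_subset _ _) fun z _ _ => hw0 z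
  set t : ℝ := ε / 4 with ht
  have ht0 : 0 < t := by positivity
  have ht2 : t ≤ 1 / 2 := by rw [ht]; linarith
  set F : Z → ℝ := fun z => w z * Real.exp (t * (if P z then 1 else 0)) with hF
  have hF0 : ∀ z, 0 ≤ F z := fun z => mul_nonneg (hw0 z) (Real.exp_pos _).le
  have hcard : ∀ S : Fin m → Z,
      (((univ.filter fun i => P (S i)).card : ℝ)) = ∑ i, (if P (S i) then (1:ℝ) else 0) := by
    intro S
    rw [Finset.card_filter]
    push_cast
    exact Finset.sum_congr rfl fun i _ => by split <;> simp
  have key : ∀ S : Fin m → Z,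
      (∏ i, w (S i)) * Real.exp (t * ((univ.filter fun i => P (S i)).card : ℝ)
        - t * m * (q + ε))
      = Real.exp (-(t * m * (q + ε))) * ∏ i, F (S i) := by
    intro S
    rw [hcard S, Real.exp_sub, Finset.mul_sum, Real.exp_sum]
    simp only [hF]
    rw [Finset.prod_mul_distrib]
    rw [div_eq_mul_inv, ← Real.exp_neg]
    ring
  have hFsum : ∑ z, F z = 1 - q + q * Real.exp t := by
    rw [← Finset.sum_filter_add_sum_filter_not univ P]
    have e1 : ∑ z ∈ univ.filter P, F z = q * Real.exp t := by
      rw [hq, Finset.sum_mul]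
      refine Finset.sum_congr rfl fun z hz => ?_
      rw [Finset.mem_filter] at hz
      simp [hF, hz.2]
    have e2 : ∑ z ∈ univ.filter (fun z => ¬ P z), F z
        = ∑ z ∈ univ.filter (fun z => ¬ P z), w z := by
      refine Finset.sum_congr rfl fun z hz => ?_
      rw [Finset.mem_filter] at hz
      simp [hF, hz.2]
    have e3 : q + ∑ z ∈ univ.filter (fun z => ¬ P z), w z = 1 := by
      rw [hq, Finset.sum_filter_add_sum_filter_not univ P, hw1]
    rw [e1, e2]
    linarith
  calc ∑ S ∈ univ.filter (fun S : Fin m → Z =>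
        q + ε < ((univ.filter fun i => P (S i)).card : ℝ) / m), ∏ i, w (S i)
      ≤ ∑ S ∈ univ.filter (fun S : Fin m → Z =>
        q + ε < ((univ.filter fun i => P (S i)).card : ℝ) / m),
          (∏ i, w (S i)) * Real.exp (t * ((univ.filter fun i => P (S i)).card : ℝ)
            - t * m * (q + ε)) := by
        refine Finset.sum_le_sum fun S hS => ?_
        rw [Finset.mem_filter] at hS
        have hk : (m : ℝ) * (q + ε) < ((univ.filter fun i => P (S i)).card : ℝ) := by
          have hmpos : (0:ℝ) < m := by exact_mod_cast hm
          rw [lt_div_iff₀ hmpos] at hS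
          linarith [hS.2]
        have : (1:ℝ) ≤ Real.exp (t * ((univ.filter fun i => P (S i)).card : ℝ)
            - t * m * (q + ε)) := by
          rw [← Real.exp_zero]
          apply Real.exp_le_exp.2
          nlinarith
        nlinarith [Finset.prod_nonneg (fun i (_ : i ∈ univ) => hw0 (S i))]
    _ ≤ ∑ S : Fin m → Z,
          (∏ i, w (S i)) * Real.exp (t * ((univ.filter fun i => P (S i)).card : ℝ)
            - t * m * (q + ε)) := by
        apply Finset.sum_le_sum_of_subset_of_nonneg (Finset.filter_subset _ _)
        intro S _ _
        exact mul_nonneg (Finset.prod_nonneg fun i _ => hw0 (S i)) (Real.exp_pos _).le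
    _ = Real.exp (-(t * m * (q + ε))) * ∑ S : Fin m → Z, ∏ i, F (S i) := by
        rw [Finset.mul_sum]
        exact Finset.sum_congr rfl fun S _ => key S
    _ = Real.exp (-(t * m * (q + ε))) * (∑ z, F z) ^ m := by
        rw [Fintype.sum_pow F m]
    _ ≤ Real.exp (-(t * m * (q + ε))) * Real.exp (q * (Real.exp t - 1)) ^ m := by
        apply mul_le_mul_of_nonneg_left _ (Real.exp_pos _).le
        apply pow_le_pow_left₀
        · rw [hFsum]; nlinarith [Real.exp_pos t, Real.add_one_le_exp t]
        · rw [hFsum]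
          have := Real.add_one_le_exp (q * (Real.exp t - 1))
          linarith
    _ ≤ Real.exp (-(m : ℝ) * ε ^ 2 / 8) := by
        rw [← Real.exp_nat_mul, ← Real.exp_add]
        apply Real.exp_le_exp.2
        have haux : Real.exp t - 1 - t ≤ 2 * t ^ 2 := exp_aux' ht0.le ht2
        have hnn : 0 ≤ Real.exp t - 1 - t := by linarith [Real.add_one_le_exp t]
        have hqe : q * (Real.exp t - 1) - t * (q + ε) ≤ 2 * t^2 - t * ε := by
          nlinarith
        have hfin : 2 * t^2 - t * ε = - ε^2 / 8 := by rw [ht]; ring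
        have hm0 : (0:ℝ) ≤ m := Nat.cast_nonneg m
        nlinarith

lemma chernoff_abs' {Z : Type*} [Fintype Z] (w : Z → ℝ) (hw0 : ∀ z, 0 ≤ w z)
    (hw1 : ∑ z, w z = 1) {m : ℕ} (hm : 0 < m) (P : Z → Prop) (ε : ℝ)
    (hε0 : 0 < ε) (hε1 : ε ≤ 1) :
    ∑ S ∈ univ.filter (fun S : Fin m → Z =>
        ε < |((univ.filter fun i => P (S i)).card : ℝ) / m - ∑ z ∈ univ.filter P, w z|),
      ∏ i, w (S i) ≤ 2 * Real.exp (-(m : ℝ) * ε ^ 2 / 8) := by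
  have hmpos : (0:ℝ) < m := by exact_mod_cast hm
  have hcompl : ∀ S : Fin m → Z,
      ((univ.filter fun i => ¬ P (S i)).card : ℝ)
        = m - ((univ.filter fun i => P (S i)).card : ℝ) := by
    intro S
    have := Finset.card_filter_add_card_filter_not
      (s := (univ : Finset (Fin m))) (p := fun i => P (S i))
    beta_reduce at this
    have hc : (univ : Finset (Fin m)).card = m := Finset.card_univ.trans (Fintype.card_fin m)
    rw [hc] at this
    have := congrArg (fun n : ℕ => (n : ℝ)) this
    push_cast at this
    linarith
  have hsub : univ.filter (fun S : Fin m → Z =>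
        ε < |((univ.filter fun i => P (S i)).card : ℝ) / m - ∑ z ∈ univ.filter P, w z|)
      ⊆ univ.filter (fun S : Fin m → Z =>
          (∑ z ∈ univ.filter P, w z) + ε < ((univ.filter fun i => P (S i)).card : ℝ) / m)
        ∪ univ.filter (fun S : Fin m → Z =>
          (∑ z ∈ univ.filter (fun z => ¬ P z), w z) + ε
            < ((univ.filter fun i => ¬ P (S i)).card : ℝ) / m) := by
    intro S hS
    simp only [Finset.mem_filter, Finset.mem_univ, true_and, Finset.mem_union] at hS ⊢
    rcases lt_abs.1 hS with h | h
    · left; linarith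
    · right
      have hqc : ∑ z ∈ univ.filter (fun z => ¬ P z), w z
          = 1 - ∑ z ∈ univ.filter P, w z := by
        have h2 := Finset.sum_filter_add_sum_filter_not univ P w
        linarith [h2, hw1]
      rw [hqc, hcompl S]
      have : ((m : ℝ) - ((univ.filter fun i => P (S i)).card : ℝ)) / m
          = 1 - ((univ.filter fun i => P (S i)).card : ℝ) / m := by
        field_simp
      rw [this]
      linarith
  calc ∑ S ∈ univ.filter (fun S : Fin m → Z =>
        ε < |((univ.filter fun i => P (S i)).card : ℝ) / m - ∑ z ∈ univ.filter P, w z|),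
      ∏ i, w (S i)
      ≤ ∑ S ∈ (univ.filter (fun S : Fin m → Z =>
          (∑ z ∈ univ.filter P, w z) + ε < ((univ.filter fun i => P (S i)).card : ℝ) / m)
        ∪ univ.filter (fun S : Fin m → Z =>
          (∑ z ∈ univ.filter (fun z => ¬ P z), w z) + ε
            < ((univ.filter fun i => ¬ P (S i)).card : ℝ) / m)), ∏ i, w (S i) :=
        Finset.sum_le_sum_of_subset_of_nonneg hsub
          (fun S _ _ => Finset.prod_nonneg fun i _ => hw0 (S i))
    _ ≤ (∑ S ∈ univ.filter (fun S : Fin m → Z =>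
          (∑ z ∈ univ.filter P, w z) + ε < ((univ.filter fun i => P (S i)).card : ℝ) / m),
            ∏ i, w (S i))
        + ∑ S ∈ univ.filter (fun S : Fin m → Z =>
          (∑ z ∈ univ.filter (fun z => ¬ P z), w z) + ε
            < ((univ.filter fun i => ¬ P (S i)).card : ℝ) / m), ∏ i, w (S i) := by
        have h1 := Finset.sum_union_inter (s₁ := univ.filter (fun S : Fin m → Z =>
          (∑ z ∈ univ.filter P, w z) + ε < ((univ.filter fun i => P (S i)).card : ℝ) / m))
          (s₂ := univ.filter (fun S : Fin m → Z =>
          (∑ z ∈ univ.filter (fun z => ¬ P z), w z) + ε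
            < ((univ.filter fun i => ¬ P (S i)).card : ℝ) / m))
          (f := fun S => ∏ i, w (S i))
        have h2 : (0:ℝ) ≤ ∑ S ∈ (univ.filter (fun S : Fin m → Z =>
          (∑ z ∈ univ.filter P, w z) + ε < ((univ.filter fun i => P (S i)).card : ℝ) / m)
          ∩ univ.filter (fun S : Fin m → Z =>
          (∑ z ∈ univ.filter (fun z => ¬ P z), w z) + ε
            < ((univ.filter fun i => ¬ P (S i)).card : ℝ) / m)), ∏ i, w (S i) :=
          Finset.sum_nonneg fun S _ => Finset.prod_nonneg fun i _ => hw0 (S i)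
        linarith
    _ ≤ Real.exp (-(m : ℝ) * ε ^ 2 / 8) + Real.exp (-(m : ℝ) * ε ^ 2 / 8) := by
        have hb1 := tail_bound' w hw0 hw1 hm P ε hε0 hε1
        have hb2 := tail_bound' w hw0 hw1 hm (fun z => ¬ P z) ε hε0 hε1
        convert add_le_add hb1 hb2 using 2
        congr 1
        congr!
    _ = 2 * Real.exp (-(m : ℝ) * ε ^ 2 / 8) := by ring

lemma tv_core' {I : Type*} [Fintype I] (H : Finset I) (hne : H.Nonempty)
    (u v : I → ℝ) (c : ℝ) (hc0 : 0 ≤ c) (hc4 : c ≤ 1/4)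
    (hclose : ∀ h ∈ H, |u h - v h| ≤ c) :
    (1/2) * ∑ h ∈ H, |Real.exp (-(u h)) / ∑ h' ∈ H, Real.exp (-(u h'))
        - Real.exp (-(v h)) / ∑ h' ∈ H, Real.exp (-(v h'))| ≤ 2 * c := by
  set A := ∑ h' ∈ H, Real.exp (-(u h')) with hA
  set B := ∑ h' ∈ H, Real.exp (-(v h')) with hB
  have hApos : 0 < A := Finset.sum_pos (fun _ _ => Real.exp_pos _) hne
  have hBpos : 0 < B := Finset.sum_pos (fun _ _ => Real.exp_pos _) hne
  have hBA : Real.exp (-c) * A ≤ B := by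
    rw [hA, hB, Finset.mul_sum]
    refine Finset.sum_le_sum fun h hh => ?_
    rw [← Real.exp_add]
    apply Real.exp_le_exp.2
    have := (abs_le.1 (hclose h hh)).1
    linarith
  have hAB : B ≤ Real.exp c * A := by
    rw [hA, hB, Finset.mul_sum]
    refine Finset.sum_le_sum fun h hh => ?_
    rw [← Real.exp_add]
    apply Real.exp_le_exp.2
    have := (abs_le.1 (hclose h hh)).2
    linarith
  have hterm : ∀ h ∈ H, |Real.exp (-(u h))/A - Real.exp (-(v h))/B|
      ≤ (Real.exp (2*c) - 1) * (Real.exp (-(u h))/A) := by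
    intro h hh
    have hd1 := (abs_le.1 (hclose h hh)).1
    have hd2 := (abs_le.1 (hclose h hh)).2
    have hup : Real.exp (-(v h))/B ≤ Real.exp (2*c) * (Real.exp (-(u h))/A) := by
      have hnum : Real.exp (-(v h)) ≤ Real.exp c * Real.exp (-(u h)) := by
        rw [← Real.exp_add]; apply Real.exp_le_exp.2; linarith
      have : Real.exp (-(v h))/B ≤ (Real.exp c * Real.exp (-(u h))) / (Real.exp (-c) * A) :=
        div_le_div₀ (by positivity) hnum (by positivity) hBA
      refine this.trans (le_of_eq ?_)
      rw [show Real.exp (2*c) = Real.exp c / Real.exp (-c) by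
        rw [← Real.exp_sub]; ring_nf]
      field_simp
    have hdown : Real.exp (-(2*c)) * (Real.exp (-(u h))/A) ≤ Real.exp (-(v h))/B := by
      have hnum : Real.exp (-c) * Real.exp (-(u h)) ≤ Real.exp (-(v h)) := by
        rw [← Real.exp_add]; apply Real.exp_le_exp.2; linarith
      have : (Real.exp (-c) * Real.exp (-(u h))) / (Real.exp c * A) ≤ Real.exp (-(v h))/B :=
        div_le_div₀ (by positivity) hnum (by positivity) hAB
      refine le_trans (le_of_eq ?_) this
      rw [show Real.exp (-(2*c)) = Real.exp (-c) / Real.exp c by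
        rw [← Real.exp_sub]; ring_nf]
      field_simp
    have hr0 : 0 ≤ Real.exp (-(u h))/A := by positivity
    have hee : 1 - Real.exp (-(2*c)) ≤ Real.exp (2*c) - 1 := by
      have h1 : Real.exp (-(2*c)) * Real.exp (2*c) = 1 := by
        rw [← Real.exp_add]; ring_nf; exact Real.exp_zero
      nlinarith [sq_nonneg (Real.exp (2*c) - 1), Real.exp_pos (2*c)]
    rw [abs_sub_le_iff]
    constructor
    · nlinarith
    · nlinarith
  calc (1/2) * ∑ h ∈ H, |Real.exp (-(u h)) / A - Real.exp (-(v h)) / B|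
      ≤ (1/2) * ∑ h ∈ H, (Real.exp (2*c) - 1) * (Real.exp (-(u h))/A) := by
        have := Finset.sum_le_sum hterm
        linarith
    _ = (1/2) * (Real.exp (2*c) - 1) := by
        rw [← Finset.mul_sum]
        have : ∑ h ∈ H, Real.exp (-(u h))/A = 1 := by
          rw [← Finset.sum_div, ← hA, div_self hApos.ne']
        rw [this, mul_one]
    _ ≤ 2 * c := by
        have := exp_aux' (t := 2*c) (by linarith) (by linarith)
        nlinarith

end Aux

set_option maxHeartbeats 2000000 in
theorem stmt13 {X : Type*} [Fintype X] [DecidableEq X] (D : PMF (X × Bool)) (β α d : ℝ)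
    (hβ : β ∈ Set.Ioo (0 : ℝ) 0.1) (hα : 0 < α) (hd : 1 ≤ d)
    (H : Finset (X → Bool)) (hne : H.Nonempty) (hcard : (H.card : ℝ) ≤ 2 ^ d)
    (γ : ℝ) (hγ : γ = 2 * (d + Real.log (1 / β) + 10) / α)
    (m : ℕ) (hm : m = ⌈10 ^ 6 * γ ^ 2 * d * Real.log (1 / β) / β ^ 4⌉₊)
    (PH : (X → Bool) → ℝ)
    (hPH : ∀ h, PH h =
      if h ∈ H then
        Real.exp (-γ * (errD D h).toReal) / ∑ h' ∈ H, Real.exp (-γ * (errD D h').toReal)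
      else 0)
    (Phat : (Fin m → X × Bool) → (X → Bool) → ℝ)
    (hPhat : ∀ S h, Phat S h =
      if h ∈ H then
        Real.exp (-γ * errS S h) / ∑ h' ∈ H, Real.exp (-γ * errS S h')
      else 0) :
    pr (iidPMF D m) {S | (1 / 2) * ∑ h, |PH h - Phat S h| ≤ β / 10}
      ≥ ENNReal.ofReal (1 - β ^ 2 / 10) := by
  obtain ⟨hβ0, hβ1⟩ := hβ
  have hβ1' : β < 0.1 := hβ1
  set L := Real.log (1 / β) with hLdef
  have hL2 : 2 < L := by
    have he2 : Real.exp 2 < 10 := by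
      have h1 := Real.exp_one_lt_d9
      have : Real.exp 2 = Real.exp 1 * Real.exp 1 := by
        rw [← Real.exp_add]; norm_num
      nlinarith [Real.exp_pos 1]
    have h10 : (10:ℝ) < 1 / β := by
      rw [lt_div_iff₀ hβ0]; nlinarith
    rw [hLdef]
    exact (Real.lt_log_iff_exp_lt (by positivity)).2 (by linarith)
  have hγpos : 0 < γ := by
    rw [hγ]
    apply div_pos _ hα
    nlinarith
  have hmRge : (10 ^ 6 * γ ^ 2 * d * L / β ^ 4 : ℝ) ≤ m := by
    rw [hm]; exact Nat.le_ceil _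
  have hmpos : 0 < m := by
    rw [hm]
    apply Nat.ceil_pos.2
    have hd0 : (0:ℝ) < d := lt_of_lt_of_le one_pos hd
    have hL0 : (0:ℝ) < L := by linarith
    have : (0:ℝ) < 10 ^ 6 * γ ^ 2 * d * L / β ^ 4 := by
      apply div_pos _ (by positivity)
      have h1 : (0:ℝ) < 10 ^ 6 * γ ^ 2 := by positivity
      have := mul_pos (mul_pos h1 hd0) hL0
      linarith
    exact this
  set ε := min (β / (40 * γ)) 1 with hεdef
  have hε0 : 0 < ε := lt_min (by positivity) one_pos
  have hε1 : ε ≤ 1 := min_le_right _ _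
  have hγε : γ * ε ≤ β / 40 := by
    calc γ * ε ≤ γ * (β / (40 * γ)) :=
          mul_le_mul_of_nonneg_left (min_le_left _ _) hγpos.le
      _ = β / 40 := by field_simp
  -- weights
  set w : X × Bool → ℝ := fun z => (D z).toReal with hwdef
  have hw0 : ∀ z, 0 ≤ w z := fun z => ENNReal.toReal_nonneg
  have hw1 : ∑ z, w z = 1 := sum_toReal_eq_one' D
  have herrD : ∀ h : X → Bool,
      (errD D h).toReal = ∑ z ∈ univ.filter (fun z : X × Bool => h z.1 ≠ z.2), w z := by
    intro h
    rw [errD, pr_eq_ofReal' D (fun z : X × Bool => h z.1 ≠ z.2),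
      ENNReal.toReal_ofReal (Finset.sum_nonneg fun z _ => hw0 z)]
    congr!
  have herrD01 : ∀ h : X → Bool, 0 ≤ (errD D h).toReal ∧ (errD D h).toReal ≤ 1 := by
    intro h
    rw [herrD h]
    constructor
    · exact Finset.sum_nonneg fun z _ => hw0 z
    · rw [← hw1]
      exact Finset.sum_le_sum_of_subset_of_nonneg (Finset.filter_subset _ _) fun z _ _ => hw0 z
  have herrS01 : ∀ (S : Fin m → X × Bool) (h : X → Bool), 0 ≤ errS S h ∧ errS S h ≤ 1 := by
    intro S h
    rw [errS]
    have hmp : (0:ℝ) < m := by exact_mod_cast hmpos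
    constructor
    · positivity
    · rw [div_le_one hmp]
      have : (univ.filter fun i => h (S i).1 ≠ (S i).2).card ≤ m := by
        calc (univ.filter fun i => h (S i).1 ≠ (S i).2).card ≤ (univ : Finset (Fin m)).card :=
              Finset.card_le_card (Finset.filter_subset _ _)
          _ = m := Finset.card_univ.trans (Fintype.card_fin m)
      exact_mod_cast this
  -- the good event
  set good : (Fin m → X × Bool) → Prop :=
    fun S => ∀ h ∈ H, |errS S h - (errD D h).toReal| ≤ ε with hgooddef
  -- good implies the TV bound
  have hincl : ∀ S, good S → (1 / 2) * ∑ h, |PH h - Phat S h| ≤ β / 10 := by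
    intro S hS
    have hc0 : 0 ≤ γ * ε := by positivity
    have hc4 : γ * ε ≤ 1/4 := by nlinarith
    have hclose : ∀ h ∈ H, |γ * (errD D h).toReal - γ * errS S h| ≤ γ * ε := by
      intro h hh
      rw [← mul_sub, abs_mul, abs_of_pos hγpos]
      apply mul_le_mul_of_nonneg_left _ hγpos.le
      rw [abs_sub_comm]
      exact hS h hh
    have htv := tv_core' H hne (fun h => γ * (errD D h).toReal) (fun h => γ * errS S h)
      (γ * ε) hc0 hc4 hclose
    have hredex : ∑ h, |PH h - Phat S h|
        = ∑ h ∈ H, |Real.exp (-(γ * (errD D h).toReal))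
            / (∑ h' ∈ H, Real.exp (-(γ * (errD D h').toReal)))
          - Real.exp (-(γ * errS S h))
            / (∑ h' ∈ H, Real.exp (-(γ * errS S h')))| := by
      rw [← Finset.sum_subset (Finset.subset_univ H)]
      · refine Finset.sum_congr rfl fun h hh => ?_
        rw [hPH, hPhat, if_pos hh, if_pos hh]
        simp only [neg_mul]
      · intro h _ hh
        rw [hPH, hPhat, if_neg hh, if_neg hh, sub_zero, abs_zero]
    calc (1 / 2) * ∑ h, |PH h - Phat S h|
        = (1/2) * ∑ h ∈ H, |Real.exp (-(γ * (errD D h).toReal))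
            / (∑ h' ∈ H, Real.exp (-(γ * (errD D h').toReal)))
          - Real.exp (-(γ * errS S h))
            / (∑ h' ∈ H, Real.exp (-(γ * errS S h')))| := by rw [hredex]
      _ ≤ 2 * (γ * ε) := htv
      _ ≤ β / 10 := by linarith
  -- probability of the bad event
  have hbad : ∑ S ∈ univ.filter (fun S : Fin m → X × Bool => ¬ good S), ∏ i, w (S i)
      ≤ β ^ 2 / 10 := by
    rcases le_or_gt (β / (40 * γ)) 1 with hcase | hcase
    · -- ε = β/(40γ) : use concentration
      have hεeq : ε = β / (40 * γ) := min_eq_left hcase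
      have hγε2 : γ ^ 2 * ε ^ 2 = β ^ 2 / 1600 := by
        rw [hεeq]
        field_simp
        ring
      -- per-hypothesis Chernoff bound
      have hhb : ∀ h ∈ H,
          ∑ S ∈ univ.filter (fun S : Fin m → X × Bool =>
            ε < |errS S h - (errD D h).toReal|), ∏ i, w (S i)
          ≤ 2 * Real.exp (-(m:ℝ) * ε ^ 2 / 8) := by
        intro h _
        have hb := chernoff_abs' w hw0 hw1 hmpos (fun z : X × Bool => h z.1 ≠ z.2) ε hε0 hε1
        refine le_trans (le_of_eq ?_) hb
        apply Finset.sum_congr _ (fun _ _ => rfl)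
        apply Finset.filter_congr
        intro S _
        rw [errS, herrD h]
        congr!
      -- union bound
      have hub := union_bound' H (fun h (S : Fin m → X × Bool) =>
        ε < |errS S h - (errD D h).toReal|) (fun S => ∏ i, w (S i))
        (fun S => Finset.prod_nonneg fun i _ => hw0 (S i))
      have hfilter_eq : univ.filter (fun S : Fin m → X × Bool => ¬ good S)
          = univ.filter (fun S : Fin m → X × Bool =>
              ∃ h ∈ H, ε < |errS S h - (errD D h).toReal|) := by
        apply Finset.filter_congr
        intro S _
        rw [hgooddef]
        constructor
        · intro hn
          by_contra h2
          push_neg at h2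
          exact hn h2
        · rintro ⟨h, hh, hlt⟩ hc
          exact absurd (hc h hh) (not_le.2 hlt)
      rw [hfilter_eq]
      calc ∑ S ∈ univ.filter (fun S : Fin m → X × Bool =>
              ∃ h ∈ H, ε < |errS S h - (errD D h).toReal|), ∏ i, w (S i)
          ≤ ∑ h ∈ H, ∑ S ∈ univ.filter (fun S : Fin m → X × Bool =>
              ε < |errS S h - (errD D h).toReal|), ∏ i, w (S i) := hub
        _ ≤ ∑ h ∈ H, 2 * Real.exp (-(m:ℝ) * ε ^ 2 / 8) := Finset.sum_le_sum hhb
        _ = (H.card : ℝ) * (2 * Real.exp (-(m:ℝ) * ε ^ 2 / 8)) := by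
            rw [Finset.sum_const, nsmul_eq_mul]
        _ ≤ 2 ^ d * (2 * Real.exp (-(m:ℝ) * ε ^ 2 / 8)) :=
            mul_le_mul_of_nonneg_right hcard (by positivity)
        _ ≤ β ^ 2 / 10 := by
            -- numeric part
            have hmε : 625 * d * L / β ^ 2 ≤ (m:ℝ) * ε ^ 2 := by
              have h1 : (10 ^ 6 * γ ^ 2 * d * L / β ^ 4) * ε ^ 2 ≤ (m:ℝ) * ε ^ 2 :=
                mul_le_mul_of_nonneg_right hmRge (by positivity)
              have e1 : (10 ^ 6 * γ ^ 2 * d * L / β ^ 4) * ε ^ 2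
                  = 10 ^ 6 * d * L * (γ ^ 2 * ε ^ 2) / β ^ 4 := by ring
              rw [hγε2] at e1
              have e2 : (10:ℝ) ^ 6 * d * L * (β ^ 2 / 1600) / β ^ 4 = 625 * d * L / β ^ 2 := by
                field_simp
                ring
              rw [e1, e2] at h1
              linarith
            have hdL : 2 ≤ d * L := by nlinarith
            have hβ2 : β ^ 2 ≤ 1 / 100 := by nlinarith
            have hE : d * Real.log 2 + 2 * L + 3 ≤ (m:ℝ) * ε ^ 2 / 8 := by
              have hinv : (100:ℝ) ≤ 1 / β ^ 2 := by
                rw [le_div_iff₀ (by positivity)]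
                nlinarith
              have h3 : 62500 * (d * L) ≤ 625 * d * L / β ^ 2 := by
                have : 625 * d * L / β ^ 2 = 625 * (d * L) * (1 / β ^ 2) := by ring
                rw [this]
                nlinarith
              have hlog2 : Real.log 2 < 0.6931471808 := Real.log_two_lt_d9
              nlinarith [hmε]
            have h2d : (2:ℝ) ^ d = Real.exp (Real.log 2 * d) := by
              rw [Real.rpow_def_of_pos (by norm_num : (0:ℝ) < 2)]
            have hβL : Real.exp (-(2 * L)) = β ^ 2 := by
              have hLβ : L = - Real.log β := by rw [hLdef, one_div, Real.log_inv]
              rw [show -(2 * L) = Real.log β + Real.log β by rw [hLβ]; ring,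
                Real.exp_add, Real.exp_log hβ0]
              ring
            have he3 : (20:ℝ) < Real.exp 3 := by
              have h1 := Real.exp_one_gt_d9
              have : Real.exp 3 = Real.exp 1 * Real.exp 1 * Real.exp 1 := by
                rw [← Real.exp_add, ← Real.exp_add]; norm_num
              nlinarith [Real.exp_pos 1]
            calc (2:ℝ) ^ d * (2 * Real.exp (-(m:ℝ) * ε ^ 2 / 8))
                = 2 * Real.exp (Real.log 2 * d + -(m:ℝ) * ε ^ 2 / 8) := by
                  rw [h2d, Real.exp_add]; ring
              _ ≤ 2 * Real.exp (-(2 * L) + -3) := by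
                  apply mul_le_mul_of_nonneg_left _ (by norm_num)
                  apply Real.exp_le_exp.2
                  nlinarith
              _ = 2 * (Real.exp (-(2 * L)) * Real.exp (-3)) := by rw [Real.exp_add]
              _ = 2 * β ^ 2 * Real.exp (-3) := by rw [hβL]; ring
              _ ≤ β ^ 2 / 10 := by
                  have hexp3 : Real.exp (-3) * Real.exp 3 = 1 := by
                    rw [← Real.exp_add]; norm_num
                  have hp := Real.exp_pos (3:ℝ)
                  have hp2 := Real.exp_pos (-3:ℝ)
                  have : Real.exp (-3) < 1 / 20 := by
                    rw [lt_div_iff₀ (by norm_num)]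
                    nlinarith
                  nlinarith [sq_nonneg β]
    · -- ε = 1 : the bad event is empty
      have hεeq : ε = 1 := min_eq_right hcase.le
      have hall : ∀ S : Fin m → X × Bool, good S := by
        intro S
        rw [hgooddef]
        intro h _
        obtain ⟨hS0, hS1⟩ := herrS01 S h
        obtain ⟨hD0, hD1⟩ := herrD01 h
        rw [hεeq, abs_le]
        constructor <;> linarith
      have : univ.filter (fun S : Fin m → X × Bool => ¬ good S) = ∅ :=
        Finset.filter_eq_empty_iff.2 fun S _ => not_not_intro (hall S)
      rw [this, Finset.sum_empty]
      positivity
  -- put things together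
  have htot : ∑ S : Fin m → X × Bool, ∏ i, w (S i) = 1 := by
    rw [← Fintype.sum_pow w m, hw1, one_pow]
  have hiid : ∀ S : Fin m → X × Bool, ((iidPMF D m) S).toReal = ∏ i, w (S i) := by
    intro S
    rw [iidPMF, pmfPi_apply']
    rw [ENNReal.toReal_prod]
  have hsplit := Finset.sum_filter_add_sum_filter_not univ good
    (fun S : Fin m → X × Bool => ∏ i, w (S i))
  have hmono : ∑ S ∈ univ.filter good, ∏ i, w (S i)
      ≤ ∑ S ∈ univ.filter (fun S : Fin m → X × Bool =>
          (1 / 2) * ∑ h, |PH h - Phat S h| ≤ β / 10), ∏ i, w (S i) := by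
    apply Finset.sum_le_sum_of_subset_of_nonneg
    · intro S hS
      rw [Finset.mem_filter] at hS ⊢
      exact ⟨hS.1, hincl S hS.2⟩
    · intro S _ _
      exact Finset.prod_nonneg fun i _ => hw0 (S i)
  have hmain : 1 - β ^ 2 / 10
      ≤ ∑ S ∈ univ.filter (fun S : Fin m → X × Bool =>
          (1 / 2) * ∑ h, |PH h - Phat S h| ≤ β / 10), ∏ i, w (S i) := by
    linarith
  rw [ge_iff_le,
    pr_eq_ofReal' (iidPMF D m) (fun S => (1 / 2) * ∑ h, |PH h - Phat S h| ≤ β / 10)]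
  apply ENNReal.ofReal_le_ofReal
  refine le_trans hmain (le_of_eq ?_)
  refine Finset.sum_congr (by congr!) (fun S _ => (hiid S).symm)

end
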